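/- arXiv:1202.3179 — 6 statements merged into one kernel-verified Lean document; each statement's English description precedes it below -/
import Mathlib

section
/- Let X_1, …, X_n (n ≥ 1) be independent random variables on a probability space, each taking values in {0,1}, with 0 < P[X_i = 1] = p_i < 1 for every i. Let X = X_1 + ⋯ + X_n and μ = E[X] = p_1 + ⋯ + p_n. Then for every real θ ∈ (0,1], P[X < (1−θ)·μ] < (e^{−θ}/(1−θ)^{1−θ})^μ, where 0⁰ is interpreted as 1. -/
set_option autoImplicit false

open MeasureTheory ProbabilityTheory

/-- Theorem 4.5, Equation (3) (Chernoff lower tail): for independent Poisson trials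
`X_1,…,X_n` with `0 < P[X_i = 1] = p_i < 1`, `X = ∑ X_i`, and `μ = ∑ p_i = E[X]`,
for every `θ ∈ (0,1]`, `P[X < (1−θ)·μ] < (e^{−θ}/(1−θ)^{1−θ})^μ`, where the powers are
real exponentiation (so `0⁰ = 1`). -/
theorem chernoff_lower_tail
    {Ω : Type*} [MeasureSpace Ω] [IsProbabilityMeasure (ℙ : Measure Ω)]
    (n : ℕ) (hn : 1 ≤ n)
    (X : Fin n → Ω → ℝ)
    (hmeas : ∀ i, Measurable (X i))
    (hindep : iIndepFun X ℙ)
    (hval : ∀ i ω, X i ω = 0 ∨ X i ω = 1)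
    (pr : Fin n → ℝ)
    (hpr : ∀ i, (ℙ {ω | X i ω = 1}).toReal = pr i)
    (hpr0 : ∀ i, 0 < pr i) (hpr1 : ∀ i, pr i < 1)
    (μ : ℝ) (hμ : μ = ∑ i, pr i)
    (θ : ℝ) (hθ0 : 0 < θ) (hθ1 : θ ≤ 1) :
    (ℙ {ω | (∑ i, X i ω) < (1 - θ) * μ}).toReal <
      (Real.exp (-θ) / (1 - θ) ^ (1 - θ)) ^ μ := by
  classical
  have hXnn : ∀ i ω, 0 ≤ X i ω := fun i ω => by rcases hval i ω with h | h <;> simp [h]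
  rcases lt_or_eq_of_le hθ1 with hlt | heq
  swap
  · -- θ = 1 case
    have hset : {ω | (∑ i, X i ω) < (1 - θ) * μ} = ∅ := by
      ext ω
      simp only [Set.mem_setOf_eq, Set.mem_empty_iff_false, iff_false, not_lt, ← heq]
      simpa using Finset.sum_nonneg fun i _ => hXnn i ω
    rw [hset]
    simp only [measure_empty, ENNReal.toReal_zero, ← heq, sub_self]
    rw [Real.rpow_zero]
    exact Real.rpow_pos_of_pos (by positivity) μ
  -- θ < 1 case
  have h1θ : (0:ℝ) < 1 - θ := by linarith
  set t : ℝ := Real.log (1 - θ) with ht_def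
  have ht_neg : t < 0 := Real.log_neg h1θ (by linarith)
  have hexp_t : Real.exp t = 1 - θ := Real.exp_log h1θ
  -- integrability
  have hint : ∀ i, Integrable (fun ω => Real.exp (t * X i ω)) ℙ := by
    intro i
    refine Integrable.mono' (integrable_const (max 1 (Real.exp t)))
      (((hmeas i).const_mul t).exp.aestronglyMeasurable) (ae_of_all _ fun ω => ?_)
    rw [Real.norm_eq_abs, abs_of_pos (Real.exp_pos _)]
    rcases hval i ω with h | h <;> simp [h]
  have hXint : ∀ i, Integrable (X i) ℙ := by
    intro i
    refine Integrable.mono' (integrable_const 1) (hmeas i).aestronglyMeasurable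
      (ae_of_all _ fun ω => ?_)
    rw [Real.norm_eq_abs, abs_of_nonneg (hXnn i ω)]
    rcases hval i ω with h | h <;> simp [h]
  -- expectation of X i
  have hEX : ∀ i, ∫ ω, X i ω = pr i := by
    intro i
    have hXeq : (fun ω => X i ω) = Set.indicator {ω | X i ω = 1} (1 : Ω → ℝ) := by
      funext ω
      rcases hval i ω with h | h <;>
        simp [Set.indicator, Set.mem_setOf_eq, h, Pi.one_apply]
    have hsm : MeasurableSet {ω | X i ω = 1} := hmeas i (measurableSet_singleton 1)
    calc ∫ ω, X i ω = ∫ ω, Set.indicator {ω | X i ω = 1} (1 : Ω → ℝ) ω := by rw [hXeq]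
      _ = (ℙ {ω | X i ω = 1}).toReal := by
          rw [integral_indicator_one hsm]; rfl
      _ = pr i := hpr i
  -- mgf of each X i
  have hmgf : ∀ i, mgf (X i) ℙ t = 1 + pr i * (Real.exp t - 1) := by
    intro i
    have hpt : (fun ω => Real.exp (t * X i ω)) =
        fun ω => 1 + (Real.exp t - 1) * X i ω := by
      funext ω
      rcases hval i ω with h | h <;> simp [h]
    rw [mgf, hpt]
    rw [integral_add (integrable_const 1) ((hXint i).const_mul _), integral_const,
      integral_const_mul, hEX i]
    simp [mul_comm]
  -- Chernoff bound step
  have hε := (1 - θ) * μ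
  have hint_sum : Integrable (fun ω => Real.exp (t * (∑ i, X i) ω)) ℙ :=
    hindep.integrable_exp_mul_sum hmeas fun i _ => hint i
  have hcher := measure_le_le_exp_mul_mgf (X := ∑ i, X i) (μ := ℙ) ((1 - θ) * μ)
    ht_neg.le hint_sum
  have hsub : (ℙ {ω | (∑ i, X i ω) < (1 - θ) * μ}).toReal ≤
      (ℙ {ω | (∑ i, X i) ω ≤ (1 - θ) * μ}).toReal := by
    refine ENNReal.toReal_mono (measure_ne_top _ _) (measure_mono fun ω hω => ?_)
    simp only [Set.mem_setOf_eq, Finset.sum_apply] at *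
    exact hω.le
  -- strict bound on mgf product
  have hmgf_sum : mgf (∑ i, X i) ℙ t = ∏ i, mgf (X i) ℙ t :=
    hindep.mgf_sum hmeas Finset.univ
  have hprod_lt : ∏ i, mgf (X i) ℙ t < Real.exp (-θ * μ) := by
    have h1 : ∀ i : Fin n, mgf (X i) ℙ t < Real.exp (pr i * (Real.exp t - 1)) := by
      intro i
      rw [hmgf i, add_comm]
      exact Real.add_one_lt_exp (by
        have : Real.exp t - 1 = -θ := by rw [hexp_t]; ring
        rw [this]
        exact ne_of_lt (by nlinarith [hpr0 i]))
    have h0 : ∀ i : Fin n, 0 < mgf (X i) ℙ t := by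
      intro i
      rw [hmgf i, hexp_t]
      nlinarith [hpr0 i, hpr1 i, hθ0, hθ1]
    calc ∏ i, mgf (X i) ℙ t < ∏ i, Real.exp (pr i * (Real.exp t - 1)) :=
          Finset.prod_lt_prod_of_nonempty (fun i _ => h0 i) (fun i _ => h1 i)
            (Finset.univ_nonempty_iff.mpr ⟨⟨0, hn⟩⟩)
      _ = Real.exp (∑ i, pr i * (Real.exp t - 1)) := by rw [Real.exp_sum]
      _ = Real.exp (-θ * μ) := by
          rw [← Finset.sum_mul, ← hμ, hexp_t]; ring_nf
  have hkey : (ℙ {ω | (∑ i, X i ω) < (1 - θ) * μ}).toReal <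
      Real.exp (-t * ((1 - θ) * μ)) * Real.exp (-θ * μ) := by
    calc (ℙ {ω | (∑ i, X i ω) < (1 - θ) * μ}).toReal
        ≤ (ℙ {ω | (∑ i, X i) ω ≤ (1 - θ) * μ}).toReal := hsub
      _ ≤ Real.exp (-t * ((1 - θ) * μ)) * mgf (∑ i, X i) ℙ t := hcher
      _ < Real.exp (-t * ((1 - θ) * μ)) * Real.exp (-θ * μ) := by
          rw [hmgf_sum] at *
          exact (mul_lt_mul_iff_right₀ (Real.exp_pos _)).mpr hprod_lt
  -- rewrite RHS
  have hrhs : (Real.exp (-θ) / (1 - θ) ^ (1 - θ)) ^ μ =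
      Real.exp (-t * ((1 - θ) * μ)) * Real.exp (-θ * μ) := by
    have h1 : (1 - θ) ^ (1 - θ) = Real.exp (t * (1 - θ)) := by
      rw [Real.rpow_def_of_pos h1θ]
    have h2 : Real.exp (-θ) / (1 - θ) ^ (1 - θ) = Real.exp (-θ - t * (1 - θ)) := by
      rw [h1, Real.exp_sub]
    rw [h2, ← Real.exp_log (x := Real.exp (-θ - t * (1 - θ)) ^ μ)
      (Real.rpow_pos_of_pos (Real.exp_pos _) μ), Real.log_rpow (Real.exp_pos _),
      Real.log_exp, ← Real.exp_add]
    ring_nf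
  rw [hrhs]
  exact hkey
end

section
/- Let p ∈ (0,1), let m ≥ 2 be an integer, let n ≥ 1 and 1 ≤ k ≤ n be integers with f = k/n. Let X_1, …, X_n be independent {0,1}-valued random variables on a probability space, exactly k of which satisfy P[X_j = 1] = p + (1-p)/m and the remaining n−k of which satisfy P[X_j = 1] = (1-p)/m. Let O* = X_1 + ⋯ + X_n, μ = n·(f·p + (1-p)/m), and F' = (O*/n − (1-p)/m)/p. Then for every ε > 0, setting θ = ε·n·p·f/μ, P[(F' − f)/f > ε] < (e^θ/(1+θ)^{1+θ})^μ. -/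
set_option autoImplicit false

open MeasureTheory ProbabilityTheory

/-- Corollary 4.6, upper tail with the full Chernoff bound: for the observed count
`O* = ∑ X_j` of independent perturbation indicators (k of success probability
`p + (1-p)/m`, `n−k` of success probability `(1-p)/m`), `μ = n·(f·p + (1-p)/m)`,
`f = k/n`, and MLE `F' = (O*/n − (1-p)/m)/p`, for every `ε > 0`, with
`θ = ε·n·p·f/μ`, `P[(F' − f)/f > ε] < (e^θ/(1+θ)^{1+θ})^μ` (real exponentiation). -/
theorem mle_upper_tail_bound
    {Ω : Type*} [MeasureSpace Ω] [IsProbabilityMeasure (ℙ : Measure Ω)]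
    (p : ℝ) (hp0 : 0 < p) (hp1 : p < 1)
    (m : ℕ) (hm : 2 ≤ m)
    (n k : ℕ) (hn : 1 ≤ n) (hk1 : 1 ≤ k) (hkn : k ≤ n)
    (f : ℝ) (hf : f = (k : ℝ) / n)
    (X : Fin n → Ω → ℝ)
    (hmeas : ∀ j, Measurable (X j))
    (hindep : iIndepFun X ℙ)
    (hval : ∀ j ω, X j ω = 0 ∨ X j ω = 1)
    (K : Finset (Fin n)) (hKcard : K.card = k)
    (hin : ∀ j ∈ K, (ℙ {ω | X j ω = 1}).toReal = p + (1 - p) / m)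
    (hout : ∀ j ∉ K, (ℙ {ω | X j ω = 1}).toReal = (1 - p) / m)
    (O : Ω → ℝ) (hO : ∀ ω, O ω = ∑ j, X j ω)
    (μ : ℝ) (hμ : μ = n * (f * p + (1 - p) / m))
    (F' : Ω → ℝ) (hF' : ∀ ω, F' ω = (O ω / n - (1 - p) / m) / p)
    (ε : ℝ) (hε : 0 < ε)
    (θ : ℝ) (hθ : θ = ε * n * p * f / μ) :
    (ℙ {ω | (F' ω - f) / f > ε}).toReal <
      (Real.exp θ / (1 + θ) ^ (1 + θ)) ^ μ := by
  classical
  have hm0 : (0:ℝ) < m := by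
    have : 0 < m := lt_of_lt_of_le (by norm_num) hm
    exact_mod_cast this
  have hq : 0 < (1 - p) / m := div_pos (by linarith) hm0
  have hn0 : (0:ℝ) < n := by exact_mod_cast hn
  have hk0 : (0:ℝ) < k := by exact_mod_cast hk1
  have hf0 : 0 < f := by rw [hf]; positivity
  have hμ0 : 0 < μ := by
    rw [hμ]; exact mul_pos hn0 (add_pos (mul_pos hf0 hp0) hq)
  have hθ0 : 0 < θ := by
    rw [hθ]
    exact div_pos (mul_pos (mul_pos (mul_pos hε hn0) hp0) hf0) hμ0
  have hθμ : θ * μ = ε * n * p * f := by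
    rw [hθ]; field_simp
  have hθ1 : (0:ℝ) < 1 + θ := by linarith
  set t : ℝ := Real.log (1 + θ) with htdef
  have het : Real.exp t = 1 + θ := Real.exp_log hθ1
  have ht0 : 0 < t := Real.log_pos (by linarith)
  -- probabilities
  have hpj_pos : ∀ j, 0 < (ℙ {ω | X j ω = 1}).toReal := by
    intro j
    by_cases hjK : j ∈ K
    · rw [hin j hjK]; linarith
    · rw [hout j hjK]; exact hq
  have hsum : ∑ j, (ℙ {ω | X j ω = 1}).toReal = μ := by
    rw [← Finset.sum_add_sum_compl K]
    have h1 : ∑ j ∈ K, (ℙ {ω | X j ω = 1}).toReal = k * (p + (1 - p) / m) := by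
      rw [Finset.sum_congr rfl (fun j hj => hin j hj), Finset.sum_const, hKcard,
        nsmul_eq_mul]
    have h2 : ∑ j ∈ Kᶜ, (ℙ {ω | X j ω = 1}).toReal = ((n : ℝ) - k) * ((1 - p) / m) := by
      rw [Finset.sum_congr rfl (fun j hj => hout j (Finset.mem_compl.mp hj)),
        Finset.sum_const, Finset.card_compl, hKcard, nsmul_eq_mul,
        Fintype.card_fin, Nat.cast_sub hkn]
    rw [h1, h2, hμ, hf]
    field_simp
    ring
  -- bounds on X
  have hX0 : ∀ j ω, 0 ≤ X j ω := by
    intro j ω; rcases hval j ω with h | h <;> rw [h] <;> norm_num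
  have hX1 : ∀ j ω, X j ω ≤ 1 := by
    intro j ω; rcases hval j ω with h | h <;> rw [h] <;> norm_num
  have hOfun : O = ∑ j, X j := by
    funext ω; rw [hO]; simp [Finset.sum_apply]
  have hOmeas : Measurable O := by
    have h : O = fun ω => ∑ j, X j ω := funext hO
    rw [h]
    exact Finset.measurable_sum _ (fun j _ => hmeas j)
  have hObd : ∀ ω, O ω ≤ n := by
    intro ω
    rw [hO]
    calc ∑ j, X j ω ≤ ∑ _j : Fin n, (1:ℝ) :=
          Finset.sum_le_sum (fun j _ => hX1 j ω)
      _ = n := by simp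
  -- integrability of exp (t * O)
  have hint : Integrable (fun ω => Real.exp (t * O ω)) ℙ := by
    refine Integrable.mono' (integrable_const (Real.exp (t * n)))
      ((hOmeas.const_mul t).exp.aestronglyMeasurable) ?_
    filter_upwards with ω
    rw [Real.norm_eq_abs, abs_of_pos (Real.exp_pos _)]
    exact Real.exp_le_exp.mpr (mul_le_mul_of_nonneg_left (hObd ω) ht0.le)
  -- event inclusion
  have hsub : {ω | (F' ω - f) / f > ε} ⊆ {ω | (1 + θ) * μ ≤ O ω} := by
    intro ω hω
    simp only [Set.mem_setOf_eq] at hω ⊢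
    have h1 : ε * f < F' ω - f := (lt_div_iff₀ hf0).mp hω
    rw [hF'] at h1
    have h2 : (ε * f + f) * p < O ω / n - (1 - p) / m := by
      have := (lt_div_iff₀ hp0).mp (by linarith : ε * f + f < (O ω / n - (1 - p) / m) / p)
      linarith
    have h3 : ((ε * f + f) * p + (1 - p) / m) * n < O ω := by
      have := (lt_div_iff₀ hn0).mp (by linarith : (ε * f + f) * p + (1 - p) / m < O ω / n)
      linarith
    have key : (1 + θ) * μ = ((ε * f + f) * p + (1 - p) / m) * n := by
      linear_combination hμ + hθμ
    linarith
  -- mgf computation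
  have hmgfj : ∀ j, mgf (X j) ℙ t = 1 + θ * (ℙ {ω | X j ω = 1}).toReal := by
    intro j
    have hs : MeasurableSet {ω | X j ω = 1} := hmeas j (measurableSet_singleton 1)
    have hXint : Integrable (X j) ℙ := by
      refine Integrable.mono' (integrable_const (1:ℝ))
        (hmeas j).aestronglyMeasurable ?_
      filter_upwards with ω
      rw [Real.norm_eq_abs, abs_of_nonneg (hX0 j ω)]
      exact hX1 j ω
    have hEX : ∫ ω, X j ω = (ℙ {ω | X j ω = 1}).toReal := by
      have hind : (fun ω => X j ω)
          = Set.indicator {ω | X j ω = 1} (fun _ => (1:ℝ)) := by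
        funext ω
        rcases hval j ω with h | h
        · rw [h]
          simp [Set.indicator, h]
        · rw [h]
          simp [Set.indicator, h]
      rw [hind, integral_indicator_const _ hs, smul_eq_mul, mul_one]
      rfl
    have heq : (fun ω => Real.exp (t * X j ω)) = fun ω => 1 + θ * X j ω := by
      funext ω
      rcases hval j ω with h | h
      · rw [h]; simp
      · rw [h, mul_one, mul_one, het]
    rw [mgf, heq]
    rw [integral_add (integrable_const 1) (hXint.const_mul θ),
      integral_const, integral_const_mul, Measure.real, measure_univ, ENNReal.toReal_one,
      smul_eq_mul, mul_one, hEX]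
  have hmgf : mgf O ℙ t = ∏ j, (1 + θ * (ℙ {ω | X j ω = 1}).toReal) := by
    rw [hOfun, hindep.mgf_sum hmeas]
    exact Finset.prod_congr rfl (fun j _ => hmgfj j)
  -- strict product bound
  have hne : (Finset.univ : Finset (Fin n)).Nonempty := by
    have : Nonempty (Fin n) := ⟨⟨0, hn⟩⟩
    exact Finset.univ_nonempty
  have hprod : ∏ j, (1 + θ * (ℙ {ω | X j ω = 1}).toReal) < Real.exp (θ * μ) := by
    have hlt : ∏ j, (1 + θ * (ℙ {ω | X j ω = 1}).toReal)
        < ∏ j, Real.exp (θ * (ℙ {ω | X j ω = 1}).toReal) := by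
      refine Finset.prod_lt_prod_of_nonempty ?_ ?_ hne
      · intro j _
        have := mul_pos hθ0 (hpj_pos j)
        linarith
      · intro j _
        have hne0 : θ * (ℙ {ω | X j ω = 1}).toReal ≠ 0 :=
          (mul_pos hθ0 (hpj_pos j)).ne'
        have := Real.add_one_lt_exp hne0
        linarith
    calc ∏ j, (1 + θ * (ℙ {ω | X j ω = 1}).toReal)
        < ∏ j, Real.exp (θ * (ℙ {ω | X j ω = 1}).toReal) := hlt
      _ = Real.exp (∑ j, θ * (ℙ {ω | X j ω = 1}).toReal) := (Real.exp_sum _ _).symm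
      _ = Real.exp (θ * μ) := by rw [← Finset.mul_sum, hsum]
  -- RHS as an exponential
  have hbase : 0 < Real.exp θ / (1 + θ) ^ (1 + θ) :=
    div_pos (Real.exp_pos θ) (Real.rpow_pos_of_pos hθ1 _)
  have hRHS : (Real.exp θ / (1 + θ) ^ (1 + θ)) ^ μ
      = Real.exp (-t * ((1 + θ) * μ) + θ * μ) := by
    rw [Real.rpow_def_of_pos hbase,
      Real.log_div (Real.exp_pos θ).ne' (Real.rpow_pos_of_pos hθ1 _).ne',
      Real.log_exp, Real.log_rpow hθ1]
    congr 1
    ring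
  -- assemble
  have markov := measure_ge_le_exp_mul_mgf (X := O) (μ := ℙ) ((1 + θ) * μ) ht0.le hint
  calc (ℙ {ω | (F' ω - f) / f > ε}).toReal
      ≤ (ℙ {ω | (1 + θ) * μ ≤ O ω}).toReal :=
        ENNReal.toReal_mono (measure_ne_top _ _) (measure_mono hsub)
    _ ≤ Real.exp (-t * ((1 + θ) * μ)) * mgf O ℙ t := markov
    _ = Real.exp (-t * ((1 + θ) * μ)) * ∏ j, (1 + θ * (ℙ {ω | X j ω = 1}).toReal) := by
        rw [hmgf]
    _ < Real.exp (-t * ((1 + θ) * μ)) * Real.exp (θ * μ) :=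
        mul_lt_mul_of_pos_left hprod (Real.exp_pos _)
    _ = (Real.exp θ / (1 + θ) ^ (1 + θ)) ^ μ := by rw [← Real.exp_add, hRHS]
end

section
/- Let p ∈ (0,1), let m ≥ 2 be an integer, let n ≥ 1 and 1 ≤ k ≤ n be integers with f = k/n. Let X_1, …, X_n be independent {0,1}-valued random variables on a probability space, exactly k of which satisfy P[X_j = 1] = p + (1-p)/m and the remaining n−k of which satisfy P[X_j = 1] = (1-p)/m. Let O* = X_1 + ⋯ + X_n, μ = n·(f·p + (1-p)/m), and F' = (O*/n − (1-p)/m)/p. Then for every ε > 0 such that θ = ε·n·p·f/μ satisfies θ ∈ (0,1], P[(F' − f)/f < −ε] < (e^{−θ}/(1−θ)^{1−θ})^μ, where 0⁰ is interpreted as 1. -/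
set_option autoImplicit false

open MeasureTheory ProbabilityTheory

/-- Corollary 4.6, lower tail with the full Chernoff bound: for the observed count
`O* = ∑ X_j` of independent perturbation indicators (k of success probability
`p + (1-p)/m`, `n−k` of success probability `(1-p)/m`), `μ = n·(f·p + (1-p)/m)`,
`f = k/n`, and MLE `F' = (O*/n − (1-p)/m)/p`, for every `ε > 0` with
`θ = ε·n·p·f/μ ∈ (0,1]`, `P[(F' − f)/f < −ε] < (e^{−θ}/(1−θ)^{1−θ})^μ`
(real exponentiation, so `0⁰ = 1`). -/
theorem mle_lower_tail_bound
    {Ω : Type*} [MeasureSpace Ω] [IsProbabilityMeasure (ℙ : Measure Ω)]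
    (p : ℝ) (hp0 : 0 < p) (hp1 : p < 1)
    (m : ℕ) (hm : 2 ≤ m)
    (n k : ℕ) (hn : 1 ≤ n) (hk1 : 1 ≤ k) (hkn : k ≤ n)
    (f : ℝ) (hf : f = (k : ℝ) / n)
    (X : Fin n → Ω → ℝ)
    (hmeas : ∀ j, Measurable (X j))
    (hindep : iIndepFun X ℙ)
    (hval : ∀ j ω, X j ω = 0 ∨ X j ω = 1)
    (K : Finset (Fin n)) (hKcard : K.card = k)
    (hin : ∀ j ∈ K, (ℙ {ω | X j ω = 1}).toReal = p + (1 - p) / m)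
    (hout : ∀ j ∉ K, (ℙ {ω | X j ω = 1}).toReal = (1 - p) / m)
    (O : Ω → ℝ) (hO : ∀ ω, O ω = ∑ j, X j ω)
    (μ : ℝ) (hμ : μ = n * (f * p + (1 - p) / m))
    (F' : Ω → ℝ) (hF' : ∀ ω, F' ω = (O ω / n - (1 - p) / m) / p)
    (ε : ℝ) (hε : 0 < ε)
    (θ : ℝ) (hθ : θ = ε * n * p * f / μ) (hθ0 : 0 < θ) (hθ1 : θ ≤ 1) :
    (ℙ {ω | (F' ω - f) / f < -ε}).toReal <
      (Real.exp (-θ) / (1 - θ) ^ (1 - θ)) ^ μ := by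
  have hm2 : (2 : ℝ) ≤ (m : ℝ) := by exact_mod_cast hm
  have hmpos : (0 : ℝ) < m := by linarith
  have hnpos : (0 : ℝ) < n := by exact_mod_cast hn
  have hkpos : (0 : ℝ) < k := by exact_mod_cast hk1
  have hkn' : (k : ℝ) ≤ n := by exact_mod_cast hkn
  have hfpos : 0 < f := by rw [hf]; positivity
  have hf1 : f ≤ 1 := by rw [hf]; exact div_le_one_of_le₀ hkn' hnpos.le
  have hq0 : 0 < (1 - p) / m := div_pos (by linarith) hmpos
  have hq1 : (1 - p) / m < 1 - p := div_lt_self (by linarith) (by linarith)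
  have hμpos : 0 < μ := by
    rw [hμ]; positivity
  have hθμ : θ * μ = ε * n * p * f := by
    rw [hθ]; field_simp
  -- nonnegativity of O
  have hOnn : ∀ ω, 0 ≤ O ω := by
    intro ω
    rw [hO]
    apply Finset.sum_nonneg
    intro j _
    rcases hval j ω with h | h <;> rw [h] <;> norm_num
  -- rewrite the event
  have hkey : (1 - θ) * μ = ((-ε * f + f) * p + (1 - p) / m) * n := by
    linear_combination hμ - hθμ
  have hset : {ω | (F' ω - f) / f < -ε} = {ω | O ω < (1 - θ) * μ} := by
    ext ω
    simp only [Set.mem_setOf_eq]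
    rw [hF', hkey, div_lt_iff₀ hfpos, sub_lt_iff_lt_add, div_lt_iff₀ hp0,
      sub_lt_iff_lt_add, div_lt_iff₀ hnpos]
  rw [hset]
  rcases eq_or_lt_of_le hθ1 with hθeq | hθlt
  · -- θ = 1 : the event is empty
    have hempty : {ω | O ω < (1 - θ) * μ} = ∅ := by
      ext ω
      simp only [Set.mem_setOf_eq, Set.mem_empty_iff_false, iff_false, not_lt]
      rw [← hθeq]
      simpa using hOnn ω
    rw [hempty]
    simp only [measure_empty, ENNReal.toReal_zero]
    rw [← hθeq]
    norm_num [Real.rpow_zero]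
    positivity
  · -- θ < 1 : Chernoff
    set t : ℝ := Real.log (1 - θ) with ht_def
    have h1θ : 0 < 1 - θ := by linarith
    have het : Real.exp t = 1 - θ := Real.exp_log h1θ
    have htneg : t < 0 := Real.log_neg h1θ (by linarith)
    have hOmeas : Measurable O := by
      have : O = fun ω => ∑ j, X j ω := funext hO
      rw [this]
      exact Finset.measurable_sum _ fun j _ => hmeas j
    have h_int : Integrable (fun ω => Real.exp (t * O ω)) ℙ := by
      refine (integrable_const (1 : ℝ)).mono'
        ((hOmeas.const_mul t).exp.aestronglyMeasurable) (ae_of_all _ fun ω => ?_)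
      rw [Real.norm_eq_abs, abs_of_pos (Real.exp_pos _)]
      have : t * O ω ≤ 0 := mul_nonpos_of_nonpos_of_nonneg htneg.le (hOnn ω)
      calc Real.exp (t * O ω) ≤ Real.exp 0 := Real.exp_le_exp.mpr this
        _ = 1 := Real.exp_zero
    -- Chernoff bound
    have hcher := measure_le_le_exp_mul_mgf (X := O) (μ := ℙ) ((1 - θ) * μ) htneg.le h_int
    have hmono : (ℙ {ω | O ω < (1 - θ) * μ}).toReal ≤ (ℙ {ω | O ω ≤ (1 - θ) * μ}).toReal :=
      ENNReal.toReal_mono (measure_ne_top _ _) (measure_mono (Set.setOf_subset_setOf.mpr fun ω h => h.le))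
    -- compute mgf of each summand
    have hXint : ∀ j, Integrable (X j) ℙ := by
      intro j
      refine (integrable_const (1 : ℝ)).mono' (hmeas j).aestronglyMeasurable
        (ae_of_all _ fun ω => ?_)
      rcases hval j ω with h | h <;> rw [h] <;> norm_num
    have hXind : ∀ j, X j = Set.indicator {ω | X j ω = 1} (fun _ => (1 : ℝ)) := by
      intro j
      funext ω
      rcases hval j ω with h | h
      · rw [h, Set.indicator_of_notMem]
        simp only [Set.mem_setOf_eq, h]
        norm_num
      · rw [h, Set.indicator_of_mem]
        exact h
    have hXintegral : ∀ j, ∫ ω, X j ω ∂ℙ = (ℙ {ω | X j ω = 1}).toReal := by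
      intro j
      have hms : MeasurableSet {ω | X j ω = 1} := hmeas j (measurableSet_singleton 1)
      rw [show (fun ω => X j ω) = Set.indicator {ω | X j ω = 1} (fun _ => (1 : ℝ)) from hXind j]
      rw [MeasureTheory.integral_indicator_const (1 : ℝ) hms]
      simp
      rfl
    have hmgfj : ∀ j, mgf (X j) ℙ t = 1 + (Real.exp t - 1) * (ℙ {ω | X j ω = 1}).toReal := by
      intro j
      have hpt : ∀ ω, Real.exp (t * X j ω) = 1 + (Real.exp t - 1) * X j ω := by
        intro ω
        rcases hval j ω with h | h <;> rw [h] <;> simp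
      rw [mgf]
      simp_rw [hpt]
      rw [integral_add (integrable_const 1) ((hXint j).const_mul _), integral_const,
        integral_const_mul, hXintegral j]
      simp
    -- bounds on success probabilities
    have hpj : ∀ j, 0 < (ℙ {ω | X j ω = 1}).toReal ∧ (ℙ {ω | X j ω = 1}).toReal < 1 := by
      intro j
      by_cases hj : j ∈ K
      · rw [hin j hj]; exact ⟨by linarith, by linarith⟩
      · rw [hout j hj]; exact ⟨hq0, by linarith⟩
    -- sum of probabilities is μ
    have hsum : ∑ j, (ℙ {ω | X j ω = 1}).toReal = μ := by
      rw [← Finset.sum_sdiff (K.subset_univ)]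
      rw [Finset.sum_congr rfl (fun j hj => hout j (Finset.mem_sdiff.mp hj).2),
        Finset.sum_congr rfl (fun j hj => hin j hj)]
      rw [Finset.sum_const, Finset.sum_const, hKcard,
        Finset.card_sdiff_of_subset (K.subset_univ), Finset.card_univ, Fintype.card_fin, hKcard]
      have hμ' : μ = k * p + n * ((1 - p) / m) := by
        rw [hμ, hf]; field_simp
      rw [hμ']
      have : ((n - k : ℕ) : ℝ) = (n : ℝ) - k := by
        rw [Nat.cast_sub hkn]
      rw [nsmul_eq_mul, nsmul_eq_mul, this]
      ring
    -- strict bound on each factor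
    have hfac : ∀ j : Fin n, mgf (X j) ℙ t <
        Real.exp ((Real.exp t - 1) * (ℙ {ω | X j ω = 1}).toReal) := by
      intro j
      rw [hmgfj j]
      have hne : (Real.exp t - 1) * (ℙ {ω | X j ω = 1}).toReal ≠ 0 := by
        have h1 : Real.exp t < 1 := by rw [het]; linarith
        exact ne_of_lt (mul_neg_of_neg_of_pos (by linarith) (hpj j).1)
      have := Real.add_one_lt_exp hne
      linarith
    have hfacpos : ∀ j : Fin n, 0 < mgf (X j) ℙ t := by
      intro j
      rw [hmgfj j]
      have h1 : 0 < Real.exp t := Real.exp_pos t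
      nlinarith [(hpj j).1, (hpj j).2]
    have hne : (Finset.univ : Finset (Fin n)).Nonempty := ⟨⟨0, hn⟩, Finset.mem_univ _⟩
    have hprod : mgf O ℙ t < Real.exp ((Real.exp t - 1) * μ) := by
      have hOeq : O = ∑ j, X j := by
        funext ω; rw [hO]; simp
      rw [hOeq, hindep.mgf_sum hmeas Finset.univ]
      calc (∏ j, mgf (X j) ℙ t)
          < ∏ j, Real.exp ((Real.exp t - 1) * (ℙ {ω | X j ω = 1}).toReal) :=
            Finset.prod_lt_prod_of_nonempty (fun j _ => hfacpos j) (fun j _ => hfac j) hne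
        _ = Real.exp (∑ j, (Real.exp t - 1) * (ℙ {ω | X j ω = 1}).toReal) :=
            (Real.exp_sum _ _).symm
        _ = Real.exp ((Real.exp t - 1) * μ) := by
            rw [← Finset.mul_sum, hsum]
    -- assemble
    have hchain : (ℙ {ω | O ω < (1 - θ) * μ}).toReal <
        Real.exp (-t * ((1 - θ) * μ)) * Real.exp ((Real.exp t - 1) * μ) := by
      calc (ℙ {ω | O ω < (1 - θ) * μ}).toReal
          ≤ (ℙ {ω | O ω ≤ (1 - θ) * μ}).toReal := hmono
        _ ≤ Real.exp (-t * ((1 - θ) * μ)) * mgf O ℙ t := hcher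
        _ < Real.exp (-t * ((1 - θ) * μ)) * Real.exp ((Real.exp t - 1) * μ) := by
            exact mul_lt_mul_of_pos_left hprod (Real.exp_pos _)
    have hrhs : (Real.exp (-θ) / (1 - θ) ^ (1 - θ)) ^ μ =
        Real.exp (-t * ((1 - θ) * μ)) * Real.exp ((Real.exp t - 1) * μ) := by
      have hb : Real.exp (-θ) / (1 - θ) ^ (1 - θ) = Real.exp (-θ - t * (1 - θ)) := by
        rw [Real.rpow_def_of_pos h1θ, ← Real.exp_sub]
      rw [hb, ← Real.exp_log (Real.exp_pos (-θ - t * (1 - θ))), ← Real.exp_mul,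
        Real.log_exp, ← Real.exp_add, het]
      ring_nf
    rw [hrhs]
    exact hchain
end

section
/- For every real θ ∈ (0,1], e^θ/(1+θ)^{1+θ} ≥ e^{−θ}/(1−θ)^{1−θ}, where 0⁰ is interpreted as 1; consequently min{U₁(θ,μ), L₁(θ,μ)} = L₁(θ,μ) for every μ ≥ 0. -/
set_option autoImplicit false

/-- For `s ≥ 1`, `s·log s ≤ (s² - 1)/2`. -/
lemma mul_log_le (s : ℝ) (hs : 1 ≤ s) : s * Real.log s ≤ (s ^ 2 - 1) / 2 := by
  have hs0 : 0 < s := lt_of_lt_of_le one_pos hs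
  have hlog : 0 ≤ Real.log s := Real.log_nonneg hs
  have h := (Real.self_le_sinh_iff (x := Real.log s)).mpr hlog
  rw [Real.sinh_log hs0] at h
  have := mul_le_mul_of_nonneg_left h hs0.le
  calc s * Real.log s ≤ s * ((s - s⁻¹) / 2) := this
    _ = (s ^ 2 - 1) / 2 := by field_simp

/-- For `0 < t ≤ 1`, `(t² - 1)/2 ≤ t·log t`. -/
lemma le_mul_log (t : ℝ) (ht0 : 0 < t) (ht1 : t ≤ 1) :
    (t ^ 2 - 1) / 2 ≤ t * Real.log t := by
  have hlog : Real.log t ≤ 0 := Real.log_nonpos ht0.le ht1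
  have h := (Real.sinh_le_self_iff (x := Real.log t)).mpr hlog
  rw [Real.sinh_log ht0] at h
  have := mul_le_mul_of_nonneg_left h ht0.le
  calc (t ^ 2 - 1) / 2 = t * ((t - t⁻¹) / 2) := by field_simp
    _ ≤ t * Real.log t := this

/-- Claim 1 in the proof of Theorem 5.1: for every `θ ∈ (0,1]`,
`e^θ/(1+θ)^{1+θ} ≥ e^{−θ}/(1−θ)^{1−θ}` (real exponentiation with `0⁰ = 1`);
consequently `min{U₁(θ,μ), L₁(θ,μ)} = L₁(θ,μ)` for every `μ ≥ 0`, where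
`U₁(θ,μ) = (e^θ/(1+θ)^{1+θ})^μ` and `L₁(θ,μ) = (e^{−θ}/(1−θ)^{1−θ})^μ`. -/
theorem chernoff_min_is_lower
    (θ : ℝ) (hθ0 : 0 < θ) (hθ1 : θ ≤ 1) :
    Real.exp θ / (1 + θ) ^ (1 + θ) ≥ Real.exp (-θ) / (1 - θ) ^ (1 - θ) ∧
    ∀ μ : ℝ, 0 ≤ μ →
      min ((Real.exp θ / (1 + θ) ^ (1 + θ)) ^ μ)
          ((Real.exp (-θ) / (1 - θ) ^ (1 - θ)) ^ μ) =
        (Real.exp (-θ) / (1 - θ) ^ (1 - θ)) ^ μ := by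
  have hYpos : 0 < Real.exp (-θ) / (1 - θ) ^ (1 - θ) := by
    apply div_pos (Real.exp_pos _)
    rcases lt_or_eq_of_le hθ1 with h | h
    · exact Real.rpow_pos_of_pos (by linarith) _
    · rw [show (1:ℝ) - θ = 0 by rw [h]; ring, Real.rpow_zero]; norm_num
  have main : Real.exp θ / (1 + θ) ^ (1 + θ) ≥ Real.exp (-θ) / (1 - θ) ^ (1 - θ) := by
    have hXpos : 0 < Real.exp θ / (1 + θ) ^ (1 + θ) :=
      div_pos (Real.exp_pos _) (Real.rpow_pos_of_pos (by linarith) _)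
    rcases lt_or_eq_of_le hθ1 with h | h
    · -- θ < 1 : compare logarithms
      have h1p : (0:ℝ) < 1 + θ := by linarith
      have h1m : (0:ℝ) < 1 - θ := by linarith
      rw [ge_iff_le, ← Real.log_le_log_iff hYpos hXpos,
        Real.log_div (Real.exp_ne_zero _) (Real.rpow_pos_of_pos h1m _).ne',
        Real.log_div (Real.exp_ne_zero _) (Real.rpow_pos_of_pos h1p _).ne',
        Real.log_exp, Real.log_exp, Real.log_rpow h1m, Real.log_rpow h1p]
      have hA := mul_log_le (1 + θ) (by linarith)
      have hB := le_mul_log (1 - θ) h1m (by linarith)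
      nlinarith [hA, hB]
    · -- θ = 1 : e/4 ≥ 1/e
      subst h
      have : ((1:ℝ) - 1) ^ ((1:ℝ) - 1) = 1 := by norm_num
      rw [this]
      have h2 : ((1:ℝ) + 1) ^ ((1:ℝ) + 1) = 4 := by
        rw [show ((1:ℝ)+1) = 2 by norm_num, show ((2:ℝ):ℝ) ^ (2:ℝ) = 2 ^ (2:ℕ) by
          rw [← Real.rpow_natCast]; norm_num]
        norm_num
      rw [h2]
      have he : (2:ℝ) ≤ Real.exp 1 := by
        have := Real.add_one_le_exp (1:ℝ); linarith
      have h3 : Real.exp (-1) ≤ 1 / 2 := by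
        rw [Real.exp_neg]
        exact inv_le_of_inv_le₀ (by norm_num) (by simpa using he)
      have h4 : (1:ℝ) / 2 ≤ Real.exp 1 / 4 := by linarith
      calc Real.exp (-1) / 1 = Real.exp (-1) := div_one _
        _ ≤ 1 / 2 := h3
        _ ≤ Real.exp 1 / 4 := h4
  refine ⟨main, fun μ hμ => ?_⟩
  exact min_eq_right (Real.rpow_le_rpow hYpos.le main hμ)
end

section
/- Let p ∈ (0,1), let m ≥ 1 and n ≥ 1 be integers, let I be a nonempty finite index set, and let f : I → ℝ satisfy 0 < f_x ≤ 1 for all x ∈ I and Σ_{x∈I} f_x = 1. Let F = max_{x∈I} f_x, W = F·p + (1-p)/m, and Θ = ε·p·F/W. For each x ∈ I set w_x = f_x·p + (1-p)/m, θ_x = ε·p·f_x/w_x, and μ_x = n·w_x. Let ε ∈ (0, 1 + ((1-p)/m)/(p·F)] and δ ∈ (0,1). Then: for every x ∈ I, δ ≤ min{(e^{θ_x}/(1+θ_x)^{1+θ_x})^{μ_x}, (e^{−θ_x}/(1−θ_x)^{1−θ_x})^{μ_x}} (with 0⁰ = 1) holds if and only if n ≤ ln δ / (W · ln(e^{−Θ}/(1−Θ)^{1−Θ})).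 -/
set_option autoImplicit false

private lemma hasDerivAt_oneSub_mul_log {t : ℝ} (ht : t ≠ 1) :
    HasDerivAt (fun s => (1 - s) * Real.log (1 - s)) (-(Real.log (1 - t) + 1)) t := by
  have h1 : HasDerivAt (fun s : ℝ => 1 - s) (-1) t := (hasDerivAt_id t).const_sub 1
  have h2 := Real.hasDerivAt_mul_log (x := 1 - t) (sub_ne_zero.mpr (Ne.symm ht))
  have h3 := h2.comp t h1
  simpa [Function.comp_def, mul_comm] using h3

private lemma hasDerivAt_oneAdd_mul_log {t : ℝ} (ht : t ≠ -1) :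
    HasDerivAt (fun s => (1 + s) * Real.log (1 + s)) (Real.log (1 + t) + 1) t := by
  have h1 : HasDerivAt (fun s : ℝ => 1 + s) 1 t := (hasDerivAt_id t).const_add 1
  have h2 : (1 : ℝ) + t ≠ 0 := by intro h; apply ht; linarith
  have h3 := (Real.hasDerivAt_mul_log h2).comp t h1
  simpa [Function.comp_def] using h3

private lemma H_mono {a b : ℝ} (ha : 0 ≤ a) (hab : a ≤ b) (hb : b ≤ 1) :
    a + (1 - a) * Real.log (1 - a) ≤ b + (1 - b) * Real.log (1 - b) := by
  have hc2 : Continuous (fun s : ℝ => (1 - s) * Real.log (1 - s)) :=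
    Real.continuous_mul_log.comp (continuous_const.sub continuous_id)
  have hcont : Continuous (fun s : ℝ => s + (1 - s) * Real.log (1 - s)) :=
    continuous_id.add hc2
  have hder : ∀ t ∈ Set.Ioo (0:ℝ) 1,
      HasDerivAt (fun s : ℝ => s + (1 - s) * Real.log (1 - s))
        (1 + -(Real.log (1 - t) + 1)) t := by
    intro t ht
    exact (hasDerivAt_id t).add (hasDerivAt_oneSub_mul_log ht.2.ne)
  have hmono : MonotoneOn (fun s : ℝ => s + (1 - s) * Real.log (1 - s)) (Set.Icc 0 1) := by
    apply monotoneOn_of_deriv_nonneg (convex_Icc 0 1) hcont.continuousOn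
    · intro t ht
      rw [interior_Icc] at ht
      exact (hder t ht).differentiableAt.differentiableWithinAt
    · intro t ht
      rw [interior_Icc] at ht
      obtain ⟨ht0, ht1⟩ := ht
      rw [(hder t ⟨ht0, ht1⟩).deriv]
      have : Real.log (1 - t) ≤ 0 := Real.log_nonpos (by linarith) (by linarith)
      linarith
  exact hmono ⟨ha, hab.trans hb⟩ ⟨ha.trans hab, hb⟩ hab

private lemma H_pos {a : ℝ} (ha : 0 < a) (ha1 : a ≤ 1) :
    0 < a + (1 - a) * Real.log (1 - a) := by
  rcases eq_or_lt_of_le ha1 with h | h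
  · subst h; norm_num
  · have hx : (0:ℝ) < 1 - a := by linarith
    have hne : (1 - a)⁻¹ ≠ 1 := by
      intro hh
      rw [inv_eq_one] at hh
      linarith
    have h1 : Real.log (1 - a)⁻¹ < (1 - a)⁻¹ - 1 :=
      Real.log_lt_sub_one_of_pos (by positivity) hne
    rw [Real.log_inv] at h1
    have h2 : (1 - a) * (-Real.log (1 - a)) < (1 - a) * ((1 - a)⁻¹ - 1) :=
      mul_lt_mul_of_pos_left h1 hx
    have h3 : (1 - a) * ((1 - a)⁻¹ - 1) = a := by field_simp; ring
    nlinarith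

private lemma G_nonneg {a : ℝ} (ha : 0 ≤ a) (ha1 : a ≤ 1) :
    0 ≤ 2 * a - (1 + a) * Real.log (1 + a) + (1 - a) * Real.log (1 - a) := by
  have c1 : Continuous (fun s : ℝ => (1 + s) * Real.log (1 + s)) :=
    Real.continuous_mul_log.comp (continuous_const.add continuous_id)
  have c2 : Continuous (fun s : ℝ => (1 - s) * Real.log (1 - s)) :=
    Real.continuous_mul_log.comp (continuous_const.sub continuous_id)
  have hcont : Continuous
      (fun s : ℝ => 2 * s - (1 + s) * Real.log (1 + s) + (1 - s) * Real.log (1 - s)) :=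
    ((continuous_const.mul continuous_id).sub c1).add c2
  have hder : ∀ t ∈ Set.Ioo (0:ℝ) 1, HasDerivAt
      (fun s : ℝ => 2 * s - (1 + s) * Real.log (1 + s) + (1 - s) * Real.log (1 - s))
      (2 * 1 - (Real.log (1 + t) + 1) + -(Real.log (1 - t) + 1)) t := by
    intro t ht
    obtain ⟨ht0, ht1⟩ := ht
    exact (((hasDerivAt_id t).const_mul 2).sub
      (hasDerivAt_oneAdd_mul_log (by intro h; linarith))).add
      (hasDerivAt_oneSub_mul_log ht1.ne)
  have hmono : MonotoneOn
      (fun s : ℝ => 2 * s - (1 + s) * Real.log (1 + s) + (1 - s) * Real.log (1 - s))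
      (Set.Icc 0 1) := by
    apply monotoneOn_of_deriv_nonneg (convex_Icc 0 1) hcont.continuousOn
    · intro t ht
      rw [interior_Icc] at ht
      exact (hder t ht).differentiableAt.differentiableWithinAt
    · intro t ht
      rw [interior_Icc] at ht
      obtain ⟨ht0, ht1⟩ := ht
      rw [(hder t ⟨ht0, ht1⟩).deriv]
      have h1 : Real.log (1 + t) + Real.log (1 - t) = Real.log ((1 + t) * (1 - t)) :=
        (Real.log_mul (by linarith) (by linarith)).symm
      have h2 : Real.log ((1 + t) * (1 - t)) ≤ 0 :=
        Real.log_nonpos (by nlinarith) (by nlinarith)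
      linarith
  have := hmono (Set.mem_Icc.mpr ⟨le_refl 0, by norm_num⟩) (Set.mem_Icc.mpr ⟨ha, ha1⟩) ha
  simpa using this

/-- Theorem 5.1: with the full Chernoff bounds, a micro group of `n` records with value
frequencies `f_x` (each in `(0,1]`, summing to `1`), maximum frequency `F`,
`W = F·p + (1-p)/m`, `Θ = ε·p·F/W`, and per-value `w_x = f_x·p + (1-p)/m`,
`θ_x = ε·p·f_x/w_x`, `μ_x = n·w_x`, satisfies
`δ ≤ min{(e^{θ_x}/(1+θ_x)^{1+θ_x})^{μ_x}, (e^{−θ_x}/(1−θ_x)^{1−θ_x})^{μ_x}}` for every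
value `x` if and only if `n ≤ ln δ / (W · ln(e^{−Θ}/(1−Θ)^{1−Θ}))`
(real exponentiation with `0⁰ = 1`). -/
theorem reconstruction_privacy_iff_size_full
    (p : ℝ) (hp0 : 0 < p) (hp1 : p < 1)
    (m : ℕ) (hm : 1 ≤ m) (n : ℕ) (hn : 1 ≤ n)
    {I : Type*} [Fintype I] [Nonempty I]
    (f : I → ℝ) (hf0 : ∀ x, 0 < f x) (hf1 : ∀ x, f x ≤ 1)
    (hsum : ∑ x, f x = 1)
    (ε δ : ℝ)
    (F : ℝ) (hF : F = Finset.univ.sup' Finset.univ_nonempty f)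
    (W Θ : ℝ) (hW : W = F * p + (1 - p) / m) (hΘ : Θ = ε * p * F / W)
    (w θ μ : I → ℝ)
    (hw : ∀ x, w x = f x * p + (1 - p) / m)
    (hθ : ∀ x, θ x = ε * p * f x / w x)
    (hμ : ∀ x, μ x = n * w x)
    (hε0 : 0 < ε) (hε1 : ε ≤ 1 + ((1 - p) / m) / (p * F))
    (hδ0 : 0 < δ) (hδ1 : δ < 1) :
    (∀ x : I,
        δ ≤ min ((Real.exp (θ x) / (1 + θ x) ^ (1 + θ x)) ^ μ x)
                ((Real.exp (-θ x) / (1 - θ x) ^ (1 - θ x)) ^ μ x)) ↔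
      (n : ℝ) ≤ Real.log δ / (W * Real.log (Real.exp (-Θ) / (1 - Θ) ^ (1 - Θ))) := by
  have hm0 : (0:ℝ) < (m:ℝ) := by exact_mod_cast hm
  have hc : (0:ℝ) < (1 - p) / m := div_pos (by linarith) hm0
  obtain ⟨x₀, -, hx₀⟩ := Finset.exists_mem_eq_sup' Finset.univ_nonempty f
  have hFx : F = f x₀ := hF.trans hx₀
  have hle : ∀ x, f x ≤ F := fun x => hF ▸ Finset.le_sup' f (Finset.mem_univ x)
  have hF0 : 0 < F := hFx ▸ hf0 x₀
  have hwpos : ∀ x, 0 < w x := by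
    intro x
    rw [hw]
    have := hf0 x
    nlinarith
  have hn0 : (0:ℝ) < (n:ℝ) := by exact_mod_cast hn
  have hWw : W = w x₀ := by rw [hW, hw, hFx]
  have hΘθ : Θ = θ x₀ := by rw [hΘ, hθ, hFx, hWw]
  have hθpos : ∀ x, 0 < θ x := by
    intro x
    rw [hθ]
    have := hf0 x
    exact div_pos (by positivity) (hwpos x)
  have hθ1 : ∀ x, θ x ≤ 1 := by
    intro x
    rw [hθ, div_le_one (hwpos x), hw]
    rcases le_or_gt ε 1 with h | h
    · have hfx := hf0 x
      have h1 : ε * (p * f x) ≤ 1 * (p * f x) :=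
        mul_le_mul_of_nonneg_right h (by positivity)
      have e : ε * p * f x = ε * (p * f x) := by ring
      linarith
    · have hpF : 0 < p * F := by positivity
      have h1 : (ε - 1) * (p * F) ≤ (1 - p) / m := by
        have h2 : ε - 1 ≤ ((1 - p) / m) / (p * F) := by linarith
        calc (ε - 1) * (p * F) ≤ (((1 - p) / m) / (p * F)) * (p * F) :=
              mul_le_mul_of_nonneg_right h2 hpF.le
          _ = (1 - p) / m := by field_simp
      have h2 : (ε - 1) * (p * f x) ≤ (ε - 1) * (p * F) :=
        mul_le_mul_of_nonneg_left
          (mul_le_mul_of_nonneg_left (hle x) hp0.le) (by linarith)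
      have e : ε * p * f x = f x * p + (ε - 1) * (p * f x) := by ring
      linarith
  have hbasepos : ∀ x, (0:ℝ) < (1 - θ x) ^ (1 - θ x) := by
    intro x
    rcases eq_or_lt_of_le (hθ1 x) with h | h
    · rw [← h]
      norm_num
    · exact Real.rpow_pos_of_pos (by linarith) _
  have hlogbase : ∀ x, Real.log ((1 - θ x) ^ (1 - θ x)) = (1 - θ x) * Real.log (1 - θ x) := by
    intro x
    rcases eq_or_lt_of_le (hθ1 x) with h | h
    · rw [← h]
      norm_num
    · exact Real.log_rpow (by linarith) _
  have hLpos : ∀ x, (0:ℝ) < Real.exp (-θ x) / (1 - θ x) ^ (1 - θ x) :=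
    fun x => div_pos (Real.exp_pos _) (hbasepos x)
  have hlogL : ∀ x, Real.log (Real.exp (-θ x) / (1 - θ x) ^ (1 - θ x))
      = -(θ x + (1 - θ x) * Real.log (1 - θ x)) := by
    intro x
    rw [Real.log_div (Real.exp_ne_zero _) (hbasepos x).ne', Real.log_exp, hlogbase]
    ring
  have hHpos : ∀ x, 0 < θ x + (1 - θ x) * Real.log (1 - θ x) :=
    fun x => H_pos (hθpos x) (hθ1 x)
  have key : ∀ x : I,
      (δ ≤ min ((Real.exp (θ x) / (1 + θ x) ^ (1 + θ x)) ^ μ x)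
               ((Real.exp (-θ x) / (1 - θ x) ^ (1 - θ x)) ^ μ x)) ↔
      Real.log δ ≤ ↑n * w x * -(θ x + (1 - θ x) * Real.log (1 - θ x)) := by
    intro x
    have ht0 := hθpos x
    have ht1 := hθ1 x
    have hUbase : (0:ℝ) < (1 + θ x) ^ (1 + θ x) := Real.rpow_pos_of_pos (by linarith) _
    have hU : (0:ℝ) < Real.exp (θ x) / (1 + θ x) ^ (1 + θ x) := div_pos (Real.exp_pos _) hUbase
    have hlogU : Real.log (Real.exp (θ x) / (1 + θ x) ^ (1 + θ x))
        = θ x - (1 + θ x) * Real.log (1 + θ x) := by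
      rw [Real.log_div (Real.exp_ne_zero _) hUbase.ne', Real.log_exp,
        Real.log_rpow (by linarith)]
    have hLU : Real.exp (-θ x) / (1 - θ x) ^ (1 - θ x)
        ≤ Real.exp (θ x) / (1 + θ x) ^ (1 + θ x) := by
      rw [← Real.log_le_log_iff (hLpos x) hU, hlogL x, hlogU]
      have := G_nonneg ht0.le ht1
      linarith
    have hμ0 : 0 ≤ μ x := by
      rw [hμ]
      have := (hwpos x).le
      positivity
    have hmin : min ((Real.exp (θ x) / (1 + θ x) ^ (1 + θ x)) ^ μ x)
        ((Real.exp (-θ x) / (1 - θ x) ^ (1 - θ x)) ^ μ x)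
        = (Real.exp (-θ x) / (1 - θ x) ^ (1 - θ x)) ^ μ x :=
      min_eq_right (Real.rpow_le_rpow (hLpos x).le hLU hμ0)
    rw [hmin, ← Real.log_le_log_iff hδ0 (Real.rpow_pos_of_pos (hLpos x) _),
      Real.log_rpow (hLpos x), hlogL x, hμ x, mul_assoc]
  have hWlog : W * Real.log (Real.exp (-Θ) / (1 - Θ) ^ (1 - Θ))
      = w x₀ * -(θ x₀ + (1 - θ x₀) * Real.log (1 - θ x₀)) := by
    rw [hWw, hΘθ, hlogL x₀]
  have hD : w x₀ * -(θ x₀ + (1 - θ x₀) * Real.log (1 - θ x₀)) < 0 :=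
    mul_neg_of_pos_of_neg (hwpos x₀) (by linarith [hHpos x₀])
  rw [hWlog, le_div_iff_of_neg hD]
  constructor
  · intro h
    have h0 := (key x₀).mp (h x₀)
    have e : (↑n : ℝ) * w x₀ * -(θ x₀ + (1 - θ x₀) * Real.log (1 - θ x₀))
        = ↑n * (w x₀ * -(θ x₀ + (1 - θ x₀) * Real.log (1 - θ x₀))) := by ring
    linarith [e ▸ h0]
  · intro h x
    rw [key x]
    have hwmono : w x ≤ w x₀ := by
      rw [hw x, hw x₀]
      have h1 : f x ≤ f x₀ := hFx ▸ hle x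
      have h2 : f x * p ≤ f x₀ * p := mul_le_mul_of_nonneg_right h1 hp0.le
      linarith
    have hθmono : θ x ≤ θ x₀ := by
      rw [hθ x, hθ x₀]
      refine (div_le_div_iff₀ (hwpos x) (hwpos x₀)).mpr ?_
      rw [hw x, hw x₀]
      have h1 : f x ≤ f x₀ := hFx ▸ hle x
      have hnn : 0 ≤ ε * p * ((1 - p) / ↑m) * (f x₀ - f x) :=
        mul_nonneg (by positivity) (sub_nonneg.mpr h1)
      have e : ε * p * f x₀ * (f x * p + (1 - p) / ↑m)
          - ε * p * f x * (f x₀ * p + (1 - p) / ↑m)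
          = ε * p * ((1 - p) / ↑m) * (f x₀ - f x) := by ring
      linarith
    have hHmono : θ x + (1 - θ x) * Real.log (1 - θ x)
        ≤ θ x₀ + (1 - θ x₀) * Real.log (1 - θ x₀) :=
      H_mono (hθpos x).le hθmono (hθ1 x₀)
    have hprod : w x * (θ x + (1 - θ x) * Real.log (1 - θ x))
        ≤ w x₀ * (θ x₀ + (1 - θ x₀) * Real.log (1 - θ x₀)) :=
      mul_le_mul hwmono hHmono (hHpos x).le (hwpos x₀).le
    have h2 : (↑n:ℝ) * (w x * (θ x + (1 - θ x) * Real.log (1 - θ x)))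
        ≤ ↑n * (w x₀ * (θ x₀ + (1 - θ x₀) * Real.log (1 - θ x₀))) :=
      mul_le_mul_of_nonneg_left hprod hn0.le
    have e1 : (↑n:ℝ) * w x * -(θ x + (1 - θ x) * Real.log (1 - θ x))
        = -(↑n * (w x * (θ x + (1 - θ x) * Real.log (1 - θ x)))) := by ring
    have e2 : (↑n:ℝ) * (w x₀ * -(θ x₀ + (1 - θ x₀) * Real.log (1 - θ x₀)))
        = -(↑n * (w x₀ * (θ x₀ + (1 - θ x₀) * Real.log (1 - θ x₀)))) := by ring
    linarith [h, h2]
end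

section
/- Let p ∈ (0,1), let m ≥ 1 and n ≥ 1 be integers, let I be a nonempty finite index set, and let f : I → ℝ satisfy 0 < f_x ≤ 1 for all x ∈ I and Σ_{x∈I} f_x = 1. Let F = max_{x∈I} f_x, W = F·p + (1-p)/m, and Θ = ε·p·F/W. For each x ∈ I set w_x = f_x·p + (1-p)/m, θ_x = ε·p·f_x/w_x, and μ_x = n·w_x. Let ε ∈ (0, 1 + ((1-p)/m)/(p·F)] and δ ∈ (0,1). Then: for every x ∈ I, δ ≤ min{exp(−θ_x²·μ_x/(2+θ_x)), exp(−θ_x²·μ_x/2)} holds if and only if n ≤ −2·ln δ / (W · Θ²). -/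
set_option autoImplicit false

/-- Theorem 5.2: with the simplified Chernoff bounds, a micro group of `n` records with
value frequencies `f_x` (each in `(0,1]`, summing to `1`), maximum frequency `F`,
`W = F·p + (1-p)/m`, `Θ = ε·p·F/W`, and per-value `w_x = f_x·p + (1-p)/m`,
`θ_x = ε·p·f_x/w_x`, `μ_x = n·w_x`, satisfies
`δ ≤ min{exp(−θ_x²·μ_x/(2+θ_x)), exp(−θ_x²·μ_x/2)}` for every value `x` if and only if
`n ≤ −2·ln δ / (W·Θ²)`. -/
theorem reconstruction_privacy_iff_size_simplified
    (p : ℝ) (hp0 : 0 < p) (hp1 : p < 1)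
    (m : ℕ) (hm : 1 ≤ m) (n : ℕ) (hn : 1 ≤ n)
    {I : Type*} [Fintype I] [Nonempty I]
    (f : I → ℝ) (hf0 : ∀ x, 0 < f x) (hf1 : ∀ x, f x ≤ 1)
    (hsum : ∑ x, f x = 1)
    (ε δ : ℝ)
    (F : ℝ) (hF : F = Finset.univ.sup' Finset.univ_nonempty f)
    (W Θ : ℝ) (hW : W = F * p + (1 - p) / m) (hΘ : Θ = ε * p * F / W)
    (w θ μ : I → ℝ)
    (hw : ∀ x, w x = f x * p + (1 - p) / m)
    (hθ : ∀ x, θ x = ε * p * f x / w x)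
    (hμ : ∀ x, μ x = n * w x)
    (hε0 : 0 < ε) (hε1 : ε ≤ 1 + ((1 - p) / m) / (p * F))
    (hδ0 : 0 < δ) (hδ1 : δ < 1) :
    (∀ x : I,
        δ ≤ min (Real.exp (-(θ x) ^ 2 * μ x / (2 + θ x)))
                (Real.exp (-(θ x) ^ 2 * μ x / 2))) ↔
      (n : ℝ) ≤ -2 * Real.log δ / (W * Θ ^ 2) := by

  have hm' : (1:ℝ) ≤ (m:ℝ) := by exact_mod_cast hm
  have hc : 0 < (1 - p) / (m : ℝ) := div_pos (by linarith) (by linarith)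
  obtain ⟨x0, -, hx0⟩ := Finset.exists_mem_eq_sup' Finset.univ_nonempty f
  have hFx0 : F = f x0 := hF.trans hx0
  have hF0 : 0 < F := hFx0 ▸ hf0 x0
  have hfle : ∀ x, f x ≤ F := fun x => hF ▸ Finset.le_sup' f (Finset.mem_univ x)
  have hw0 : ∀ x, 0 < w x := fun x => by
    rw [hw x]; exact add_pos (mul_pos (hf0 x) hp0) hc
  have hW0 : 0 < W := by rw [hW]; exact add_pos (mul_pos hF0 hp0) hc
  have hθ0 : ∀ x, 0 < θ x := fun x => by
    rw [hθ x]; exact div_pos (mul_pos (mul_pos hε0 hp0) (hf0 x)) (hw0 x)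
  have hΘ0 : 0 < Θ := by
    rw [hΘ]; exact div_pos (mul_pos (mul_pos hε0 hp0) hF0) hW0
  have hn0 : (0:ℝ) ≤ (n:ℝ) := Nat.cast_nonneg n
  have hC : 0 < -2 * Real.log δ := by
    have := Real.log_neg hδ0 hδ1; linarith
  have hWΘ : 0 < W * Θ ^ 2 := by positivity
  have hkey : ∀ x, θ x ^ 2 * w x ≤ W * Θ ^ 2 := by
    intro x
    have h1 : θ x ^ 2 * w x = (ε * p * f x) ^ 2 / w x := by
      rw [hθ x, div_pow, div_mul_eq_mul_div,
        div_eq_div_iff (pow_ne_zero 2 (hw0 x).ne') (hw0 x).ne']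
      ring
    have h2 : W * Θ ^ 2 = (ε * p * F) ^ 2 / W := by
      rw [hΘ]; field_simp
    rw [h1, h2, div_le_div_iff₀ (hw0 x) hW0, hw x, hW]
    have key : f x ^ 2 * (F * p + (1 - p) / m) ≤ F ^ 2 * (f x * p + (1 - p) / m) := by
      nlinarith [mul_nonneg (mul_nonneg (mul_pos (hf0 x) hF0).le hp0.le)
          (sub_nonneg.2 (hfle x)),
        mul_nonneg hc.le (mul_nonneg (sub_nonneg.2 (hfle x))
          (by linarith [hf0 x, hF0] : (0:ℝ) ≤ f x + F))]
    nlinarith [mul_le_mul_of_nonneg_left key (sq_nonneg (ε * p))]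
  have heq : θ x0 ^ 2 * w x0 = W * Θ ^ 2 := by
    have hwx0 : w x0 = W := by rw [hw x0, hW, hFx0]
    have hθx0 : θ x0 = Θ := by rw [hθ x0, hΘ, hFx0, hwx0]
    rw [hθx0, hwx0]; ring
  have hmin : ∀ x, (δ ≤ min (Real.exp (-(θ x) ^ 2 * μ x / (2 + θ x)))
                (Real.exp (-(θ x) ^ 2 * μ x / 2)))
      ↔ (n:ℝ) * (θ x ^ 2 * w x) ≤ -2 * Real.log δ := by
    intro x
    have hμ0 : 0 ≤ θ x ^ 2 * μ x := by
      have : 0 ≤ μ x := by rw [hμ x]; exact mul_nonneg hn0 (hw0 x).le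
      positivity
    have hle : Real.exp (-(θ x) ^ 2 * μ x / 2) ≤ Real.exp (-(θ x) ^ 2 * μ x / (2 + θ x)) := by
      apply Real.exp_le_exp.2
      have hd : θ x ^ 2 * μ x / (2 + θ x) ≤ θ x ^ 2 * μ x / 2 :=
        div_le_div_of_nonneg_left hμ0 two_pos (by linarith [hθ0 x])
      have e1 : -(θ x) ^ 2 * μ x / (2 + θ x) = -(θ x ^ 2 * μ x / (2 + θ x)) := by ring
      have e2 : -(θ x) ^ 2 * μ x / 2 = -(θ x ^ 2 * μ x / 2) := by ring
      rw [e1, e2]; linarith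
    rw [min_eq_right hle, ← Real.log_le_iff_le_exp hδ0, hμ x,
      show -(θ x) ^ 2 * ((n:ℝ) * w x) / 2 = -((n:ℝ) * (θ x ^ 2 * w x) / 2) by ring]
    constructor <;> intro h <;> linarith
  have hRHS : ((n:ℝ) ≤ -2 * Real.log δ / (W * Θ ^ 2)) ↔ (n:ℝ) * (W * Θ ^ 2) ≤ -2 * Real.log δ :=
    le_div_iff₀ hWΘ
  constructor
  · intro h
    rw [hRHS, ← heq]
    exact (hmin x0).1 (h x0)
  · intro h x
    rw [hmin x]
    calc (n:ℝ) * (θ x ^ 2 * w x) ≤ (n:ℝ) * (W * Θ ^ 2) :=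
          mul_le_mul_of_nonneg_left (hkey x) hn0
      _ ≤ -2 * Real.log δ := hRHS.1 h
end
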